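/- arXiv:1804.04917 — 3 statements merged into one kernel-verified Lean document; each statement's English description precedes it below -/
import Mathlib

section
/- For every even integer r ≥ 2 and every pairing π of {1,...,r}, the genus of π, defined as genus(π) := (1/2)(r/2 + 1 − #(γ ∘ π)) where γ is the cyclic permutation (1 2 ... r) and π is identified with the involution swapping the two elements of each pair, is a nonnegative integer satisfying 0 ≤ genus(π) ≤ r/4. -/
/-- The number of cycles of a permutation of `Fin r` (fixed points counted as cycles). -/
def numCycles {r : ℕ} (σ : Equiv.Perm (Fin r)) : ℕ :=
  σ.cycleType.card + (r - σ.support.card)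

/-- A pairing of `{1,...,r}`, identified with a fixed-point-free involution. -/
def IsPairing {r : ℕ} (π : Equiv.Perm (Fin r)) : Prop :=
  π * π = 1 ∧ ∀ p, π p ≠ p

section Aux

open Equiv Equiv.Perm

variable {α : Type*} [Fintype α] [DecidableEq α]

def nc (σ : Perm α) : ℕ :=
  σ.cycleType.card + (Fintype.card α - σ.support.card)

instance qfin (σ : Perm α) : Fintype (Quotient (SameCycle.setoid σ)) :=
  @Quotient.fintype α _ (SameCycle.setoid σ)
    (fun x y => inferInstanceAs (Decidable (σ.SameCycle x y)))


omit [Fintype α] [DecidableEq α] in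
lemma sc_fix {σ : Perm α} {x y : α} (h : σ.SameCycle x y) (hx : σ x = x) : y = x := by
  obtain ⟨i, hi⟩ := h
  rw [← hi, zpow_apply_eq_self_of_apply_eq_self hx]

lemma cardQ (σ : Perm α) :
    Fintype.card (Quotient (SameCycle.setoid σ)) = nc σ := by
  classical
  have key : Fintype.card (Quotient (SameCycle.setoid σ)) =
      Fintype.card ({c // c ∈ σ.cycleFactorsFinset} ⊕ {x : α // σ x = x}) := by
    apply Fintype.card_congr
    refine Equiv.ofBijective (Quotient.lift (fun x : α =>
      if hx : σ x = x then Sum.inr ⟨x, hx⟩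
      else Sum.inl ⟨σ.cycleOf x, cycleOf_mem_cycleFactorsFinset_iff.2 (mem_support.2 hx)⟩) ?_) ?_
    · intro x y hxy
      have hxy' : σ.SameCycle x y := hxy
      by_cases hx : σ x = x
      · have : y = x := sc_fix hxy' hx
        subst this
        rfl
      · have hy : ¬ σ y = y := fun hy => hx (by rw [sc_fix hxy'.symm hy]; exact hy)
        simp only [dif_neg hx, dif_neg hy]
        congr 1
        exact Subtype.ext hxy'.cycleOf_eq
    · constructor
      · intro q1 q2
        refine Quotient.inductionOn₂ q1 q2 fun x y h => ?_
        simp only [Quotient.lift_mk] at h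
        by_cases hx : σ x = x <;> by_cases hy : σ y = y
        · rw [dif_pos hx, dif_pos hy, Sum.inr.injEq, Subtype.mk.injEq] at h
          exact Quotient.sound (h ▸ SameCycle.refl σ x)
        · rw [dif_pos hx, dif_neg hy] at h
          exact absurd h (by simp)
        · rw [dif_neg hx, dif_pos hy] at h
          exact absurd h (by simp)
        · rw [dif_neg hx, dif_neg hy, Sum.inl.injEq, Subtype.mk.injEq] at h
          apply Quotient.sound
          have : y ∈ (σ.cycleOf x).support := by
            rw [h]
            exact mem_support_cycleOf_iff.2 ⟨SameCycle.refl _ _, mem_support.2 hy⟩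
          exact (mem_support_cycleOf_iff.1 this).1
      · rintro (⟨c, hc⟩ | ⟨x, hx⟩)
        · obtain ⟨x, hxc⟩ := (mem_cycleFactorsFinset_iff.1 hc).1.nonempty_support
          have hcx : c = σ.cycleOf x := cycle_is_cycleOf hxc hc
          have hx : ¬ σ x = x := by
            have h2 := (mem_cycleFactorsFinset_iff.1 hc).2 x hxc
            intro h
            rw [h] at h2
            exact (mem_support.1 hxc) h2
          exact ⟨Quotient.mk _ x, by
            simp only [Quotient.lift_mk, dif_neg hx]
            exact congrArg _ (Subtype.ext hcx.symm)⟩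
        · exact ⟨Quotient.mk _ x, by simp [hx]⟩
  rw [key, Fintype.card_sum, Fintype.card_coe, nc]
  congr 1
  · rw [cycleType]
    simp
  · rw [Fintype.card_subtype]
    have h2 := Finset.card_filter_add_card_filter_not
      (s := (Finset.univ : Finset α)) (p := fun x => σ x = x)
    have hsupp : σ.support.card = (Finset.univ.filter (fun x => ¬ σ x = x)).card := rfl
    rw [Finset.card_univ] at h2
    omega

lemma claimC {σ : Perm α} {a b x y : α} (hxa : ¬σ.SameCycle x a) (hxb : ¬σ.SameCycle x b)
    (h : (σ * Equiv.swap a b).SameCycle x y) : σ.SameCycle x y := by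
  obtain ⟨i, _, hix⟩ := h.exists_pow_eq'
  have key : ∀ n : ℕ, σ.SameCycle x (((σ * Equiv.swap a b) ^ n) x) := by
    intro n
    induction n with
    | zero => simpa using SameCycle.refl σ x
    | succ n ih =>
      set z := ((σ * Equiv.swap a b) ^ n) x with hz
      have hza : z ≠ a := fun h => hxa (h ▸ ih)
      have hzb : z ≠ b := fun h => hxb (h ▸ ih)
      have hstep : ((σ * Equiv.swap a b) ^ (n + 1)) x = σ z := by
        rw [pow_succ', Equiv.Perm.mul_apply, ← hz, Equiv.Perm.mul_apply,
          Equiv.swap_apply_of_ne_of_ne hza hzb]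
      rw [hstep]
      exact sameCycle_apply_right.2 ih
  rw [← hix]
  exact key i

lemma nc_mul_swap_le (σ : Perm α) (a b : α) :
    nc (σ * Equiv.swap a b) ≤ nc σ + 1 := by
  classical
  set σ' := σ * Equiv.swap a b with hσ'
  have hσ : σ' * Equiv.swap a b = σ := by
    rw [hσ', mul_assoc, Equiv.swap_mul_self, mul_one]
  set pA : α → Prop := fun x => σ.SameCycle x a ∨ σ.SameCycle x b with hpA
  have C2 : ∀ x y, σ'.SameCycle x y → (σ.SameCycle x y ∨ (pA x ∧ pA y)) := by
    intro x y h
    by_cases hx : pA x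
    · by_cases hy : pA y
      · exact Or.inr ⟨hx, hy⟩
      · rw [hpA, not_or] at hy
        exact Or.inl (claimC hy.1 hy.2 h.symm).symm
    · rw [hpA, not_or] at hx
      exact Or.inl (claimC hx.1 hx.2 h)
  have NA : ∀ x, ¬pA x → ¬σ'.SameCycle x a ∧ ¬σ'.SameCycle x b := by
    intro x hx
    rw [hpA, not_or] at hx
    exact ⟨fun h => hx.1 (claimC hx.1 hx.2 h), fun h => hx.2 (claimC hx.1 hx.2 h)⟩
  have D : ∀ x, pA x → σ'.SameCycle x a ∨ σ'.SameCycle x b := by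
    intro x hx
    by_contra hcon
    rw [not_or] at hcon
    rcases hx with h | h
    · exact hcon.1 (claimC hcon.1 hcon.2 (by rw [hσ]; exact h))
    · exact hcon.2 (claimC hcon.1 hcon.2 (by rw [hσ]; exact h))
  have I1 : ∀ x y, ¬pA x → σ.SameCycle x y → σ'.SameCycle x y := by
    intro x y hx h
    obtain ⟨h1, h2⟩ := NA x hx
    exact claimC h1 h2 (by rw [hσ]; exact h)
  set s := SameCycle.setoid σ
  set t := SameCycle.setoid σ'
  have pAinv : ∀ x y, σ.SameCycle x y → pA x → pA y := by
    intro x y h hx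
    rcases hx with h' | h'
    · exact Or.inl (h.symm.trans h')
    · exact Or.inr (h.symm.trans h')
  have wd : ∀ x y : α, (SameCycle.setoid σ').r x y →
      (if pA x then Quotient.mk s a else Quotient.mk s x) =
      (if pA y then Quotient.mk s a else Quotient.mk s y) := by
    intro x y h
    rcases C2 x y h with hs | ⟨h1, h2⟩
    · by_cases hx : pA x
      · rw [if_pos hx, if_pos (pAinv x y hs hx)]
      · rw [if_neg hx, if_neg (fun hy => hx (pAinv y x hs.symm hy))]
        exact Quotient.sound hs
    · rw [if_pos h1, if_pos h2]
  set F : Quotient t → Quotient s :=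
    Quotient.lift (fun x => if pA x then Quotient.mk s a else Quotient.mk s x) wd with hF
  set G : Quotient t → Option (Quotient s) :=
    fun q => if q = Quotient.mk t b then none else some (F q) with hG
  have hGinj : Function.Injective G := by
    intro q1 q2 h
    induction q1 using Quotient.inductionOn with | _ x =>
    induction q2 using Quotient.inductionOn with | _ y =>
    by_cases h1 : Quotient.mk t x = Quotient.mk t b <;>
      by_cases h2 : Quotient.mk t y = Quotient.mk t b
    · rw [h1, h2]
    · rw [hG] at h; simp only [if_pos h1, if_neg h2] at h; exact absurd h (by simp)
    · rw [hG] at h; simp only [if_neg h1, if_pos h2] at h; exact absurd h (by simp)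
    · rw [hG] at h
      simp only [if_neg h1, if_neg h2, Option.some.injEq] at h
      rw [hF] at h
      simp only [Quotient.lift_mk] at h
      have hxb : ¬ σ'.SameCycle x b := fun hh => h1 (Quotient.sound hh)
      have hyb : ¬ σ'.SameCycle y b := fun hh => h2 (Quotient.sound hh)
      by_cases hx : pA x <;> by_cases hy : pA y
      · have hxa : σ'.SameCycle x a := (D x hx).resolve_right hxb
        have hya : σ'.SameCycle y a := (D y hy).resolve_right hyb
        exact Quotient.sound (hxa.trans hya.symm)
      · rw [if_pos hx, if_neg hy] at h
        exact absurd (Or.inl (Quotient.exact h.symm : σ.SameCycle y a)) hy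
      · rw [if_neg hx, if_pos hy] at h
        exact absurd (Or.inl (Quotient.exact h : σ.SameCycle x a)) hx
      · rw [if_neg hx, if_neg hy] at h
        exact Quotient.sound (I1 x y hx (Quotient.exact h))
  have hcard := Fintype.card_le_of_injective G hGinj
  rw [Fintype.card_option, cardQ, cardQ] at hcard
  exact hcard

lemma nc_mul_prod_swaps_le (l : List (Perm α)) (hl : ∀ t ∈ l, ∃ a b : α, t = Equiv.swap a b) :
    ∀ σ : Perm α, nc (σ * l.prod) ≤ nc σ + l.length := by
  induction l with
  | nil => intro σ; simp
  | cons t l ih =>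
    intro σ
    obtain ⟨a, b, rfl⟩ := hl _ List.mem_cons_self
    rw [List.prod_cons, ← mul_assoc, List.length_cons]
    calc nc (σ * Equiv.swap a b * l.prod)
        ≤ nc (σ * Equiv.swap a b) + l.length :=
          ih (fun t ht => hl t (List.mem_cons_of_mem _ ht)) _
      _ ≤ nc σ + 1 + l.length := add_le_add_left (nc_mul_swap_le σ a b) _
      _ = nc σ + (l.length + 1) := by omega

lemma invol_prod_swaps : ∀ (n : ℕ) (σ : Perm α), σ.support.card ≤ n → σ * σ = 1 →
    ∃ l : List (Perm α), (∀ t ∈ l, ∃ a b : α, a ≠ b ∧ t = Equiv.swap a b) ∧ l.prod = σ ∧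
      2 * l.length = σ.support.card := by
  intro n
  induction n with
  | zero =>
    intro σ h1 _
    have hσ : σ = 1 := support_eq_empty_iff.1 (Finset.card_eq_zero.1 (Nat.le_zero.1 h1))
    exact ⟨[], by simp, by simp [hσ], by simp [hσ]⟩
  | succ n ih =>
    intro σ hn h2
    by_cases h1 : σ = 1
    · exact ⟨[], by simp, by simp [h1], by simp [h1]⟩
    · obtain ⟨x, hx⟩ : ∃ x, σ x ≠ x := by
        by_contra hc
        push_neg at hc
        exact h1 (Equiv.ext hc)
      set y := σ x with hy
      have hyx : y ≠ x := hx
      have hσy : σ y = x := by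
        have := congrArg (fun f : Perm α => f x) h2
        simpa [Equiv.Perm.mul_apply] using this
      set σ' := σ * Equiv.swap x y with hσ'd
      have hs : σ' * Equiv.swap x y = σ := by
        rw [hσ'd, mul_assoc, Equiv.swap_mul_self, mul_one]
      have hvx : σ' x = x := by
        rw [hσ'd, Equiv.Perm.mul_apply, Equiv.swap_apply_left, hσy]
      have hvy : σ' y = y := by
        rw [hσ'd, Equiv.Perm.mul_apply, Equiv.swap_apply_right, ← hy]
      have hvz : ∀ z, z ≠ x → z ≠ y → σ' z = σ z := by
        intro z hzx hzy
        rw [hσ'd, Equiv.Perm.mul_apply, Equiv.swap_apply_of_ne_of_ne hzx hzy]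
      have hfix : ∀ z, σ z ≠ z → z ≠ x → z ≠ y → (σ z ≠ x ∧ σ z ≠ y) := by
        intro z hz hzx hzy
        constructor
        · intro h
          apply hzy
          rw [hy, ← h]
          have := congrArg (fun f : Perm α => f z) h2
          simpa [Equiv.Perm.mul_apply] using (this).symm
        · intro h
          rw [hy] at h
          exact hzx (σ.injective h)
      have hsupp : σ'.support = (σ.support.erase x).erase y := by
        ext z
        rw [Finset.mem_erase, Finset.mem_erase, mem_support, mem_support]
        constructor
        · intro hz
          by_cases hzx : z = x
          · exact absurd (hzx ▸ hvx) (hzx ▸ hz)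
          · by_cases hzy : z = y
            · exact absurd (hzy ▸ hvy) (hzy ▸ hz)
            · rw [hvz z hzx hzy] at hz
              exact ⟨hzy, hzx, hz⟩
        · rintro ⟨hzy, hzx, hz⟩
          rw [hvz z hzx hzy]
          exact hz
      have hinv : σ' * σ' = 1 := by
        apply Equiv.ext
        intro z
        rw [Equiv.Perm.mul_apply, Equiv.Perm.one_apply]
        by_cases hzx : z = x
        · rw [hzx, hvx, hvx]
        · by_cases hzy : z = y
          · rw [hzy, hvy, hvy]
          · by_cases hz : σ z = z
            · rw [hvz z hzx hzy, hz, hvz z hzx hzy, hz]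
            · obtain ⟨ha, hb⟩ := hfix z hz hzx hzy
              rw [hvz z hzx hzy, hvz _ ha hb]
              have := congrArg (fun f : Perm α => f z) h2
              simpa [Equiv.Perm.mul_apply] using this
      have hmem_x : x ∈ σ.support := mem_support.2 hx
      have hmem_y : y ∈ σ.support := mem_support.2 (by rw [hσy]; exact fun h => hx h.symm)
      have hcard2 : 2 ≤ σ.support.card := by
        have hsub : ({y, x} : Finset α) ⊆ σ.support := by
          intro z hz
          rcases Finset.mem_insert.1 hz with h | h
          · exact h ▸ hmem_y
          · exact (Finset.mem_singleton.1 h) ▸ hmem_x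
        have := Finset.card_le_card hsub
        rwa [Finset.card_pair hyx] at this
      have hcard : σ'.support.card = σ.support.card - 2 := by
        rw [hsupp, Finset.card_erase_of_mem, Finset.card_erase_of_mem hmem_x]
        · omega
        · exact Finset.mem_erase.2 ⟨hyx, hmem_y⟩
      obtain ⟨l, hl, hlp, hll⟩ := ih σ' (by omega) hinv
      refine ⟨l ++ [Equiv.swap x y], ?_, ?_, ?_⟩
      · intro t ht
        rcases List.mem_append.1 ht with h | h
        · exact hl t h
        · exact ⟨x, y, Ne.symm hyx, List.mem_singleton.1 h⟩
      · rw [List.prod_append, List.prod_singleton, hlp, hs]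
      · rw [List.length_append, List.length_singleton]
        omega

lemma parity_aux {i j : ℕ} (h : ((-1 : ℤˣ)) ^ i = (-1) ^ j) : i % 2 = j % 2 := by
  rcases Nat.even_or_odd i with hi | hi <;> rcases Nat.even_or_odd j with hj | hj
  · rw [Nat.even_iff] at hi hj; omega
  · rw [hi.neg_one_pow, hj.neg_one_pow] at h
    exact absurd h (by decide)
  · rw [hi.neg_one_pow, hj.neg_one_pow] at h
    exact absurd h (by decide)
  · rw [Nat.odd_iff] at hi hj; omega

/-- The genus of a pairing `π` is well defined: `r/2 + 1 - #(γ ∘ π)` is a nonnegative even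
integer `2g` with `g ≤ r/4`, where `γ = (1 2 ... r)` is `finRotate r`. -/
theorem stmt1 (r : ℕ) (hr : 2 ≤ r) (hre : Even r) (π : Equiv.Perm (Fin r))
    (hπ : IsPairing π) :
    ∃ g : ℕ, 2 * g + numCycles (finRotate r * π) = r / 2 + 1 ∧ g ≤ r / 4 := by
  classical
  have hnc : ∀ σ : Equiv.Perm (Fin r), numCycles σ = nc σ := fun σ => by
    rw [numCycles, nc, Fintype.card_fin]
  set c := numCycles (finRotate r * π) with hc
  -- support of π is everything
  have hπsupp : π.support = Finset.univ := by
    ext p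
    simp [mem_support, hπ.2 p]
  have hπcard : π.support.card = r := by
    rw [hπsupp, Finset.card_univ, Fintype.card_fin]
  -- decompose π into swaps
  obtain ⟨l, hl, hlp, hll⟩ := invol_prod_swaps r π (by rw [hπcard]) hπ.1
  rw [hπcard] at hll
  -- nc of finRotate is 1
  have hγ : nc (finRotate r) = 1 := by
    rw [nc, cycleType_finRotate_of_le hr, support_finRotate_of_le hr, Finset.card_univ,
      Fintype.card_fin]
    simp
  -- upper bound
  have hup : c ≤ 1 + l.length := by
    rw [hc, hnc, ← hlp]
    calc nc (finRotate r * l.prod) ≤ nc (finRotate r) + l.length :=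
          nc_mul_prod_swaps_le l (fun t ht => by
            obtain ⟨a, b, _, hab⟩ := hl t ht
            exact ⟨a, b, hab⟩) _
      _ = 1 + l.length := by rw [hγ]
  -- lower bound
  have hlow : 1 ≤ c := by
    rw [hc]
    by_cases h : finRotate r * π = 1
    · rw [numCycles, h, cycleType_one, support_one]
      simp
      omega
    · have := card_cycleType_pos.2 h
      rw [numCycles]
      omega
  -- parity via sign
  set S := (finRotate r * π).support.card with hS
  set K := Multiset.card (finRotate r * π).cycleType with hK
  have hcKS : c = K + (r - S) := rfl
  have hSr : S ≤ r := by
    rw [hS]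
    calc (finRotate r * π).support.card ≤ (Finset.univ : Finset (Fin r)).card :=
          Finset.card_le_card (Finset.subset_univ _)
      _ = r := by rw [Finset.card_univ, Fintype.card_fin]
  have hsign1 : Equiv.Perm.sign (finRotate r * π) = (-1 : ℤˣ) ^ (S + K) := by
    rw [sign_of_cycleType, sum_cycleType]
  have hsignγ : Equiv.Perm.sign (finRotate r) = (-1 : ℤˣ) ^ (r + 1) := by
    rw [sign_of_cycleType, cycleType_finRotate_of_le hr]
    simp
  have hsignπ : Equiv.Perm.sign π = (-1 : ℤˣ) ^ l.length := by
    rw [← hlp]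
    exact sign_prod_list_swap (fun t ht => by
      obtain ⟨a, b, hab, ht'⟩ := hl t ht
      exact ⟨a, b, hab, ht'⟩)
  have hsign2 : ((-1 : ℤˣ)) ^ (S + K) = (-1) ^ (r + 1 + l.length) := by
    rw [← hsign1, map_mul, hsignγ, hsignπ, ← pow_add]
  have hmod := parity_aux hsign2
  refine ⟨(r / 2 + 1 - c) / 2, ?_, ?_⟩ <;> omega

end Aux
end

section
/- For every even integer r ≥ 2 and every pairing π of {1,...,r}, the genus of π is zero if and only if π is non-crossing, i.e., there exist no pairs {p,q} and {p',q'} in π with p < p' < q < q'. -/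
/-- The genus of a pairing: `genus(π) = (1/2)(r/2 + 1 - #(γ ∘ π))` with `γ = (1 2 ... r)`. -/
def pairingGenus {r : ℕ} (π : Equiv.Perm (Fin r)) : ℕ :=
  (r / 2 + 1 - numCycles (finRotate r * π)) / 2

/-- A pairing is non-crossing if there are no blocks `{p,q}`, `{p',q'}` with `p < p' < q < q'`. -/
def IsNonCrossing {r : ℕ} (π : Equiv.Perm (Fin r)) : Prop :=
  ¬ ∃ p p' : Fin r, p < p' ∧ p' < π p ∧ π p < π p'

open Equiv Equiv.Perm

def scSetoid {α : Type*} (σ : Perm α) : Setoid α :=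
  ⟨σ.SameCycle, ⟨SameCycle.refl _, SameCycle.symm, SameCycle.trans⟩⟩

lemma sameCycle_eq_of_fixed {α : Type*} {σ : Perm α} {x y : α}
    (h : σ.SameCycle x y) (hx : σ x = x) : y = x := by
  obtain ⟨k, hk⟩ := h
  rw [← hk, zpow_apply_eq_self_of_apply_eq_self hx]

variable {r : ℕ}

noncomputable def clsMap (σ : Perm (Fin r)) (x : Fin r) :
    ({c // c ∈ σ.cycleFactorsFinset} ⊕ {x : Fin r // σ x = x}) := by
  classical
  exact if h : σ x = x then Sum.inr ⟨x, h⟩ else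
    Sum.inl ⟨σ.cycleOf x, cycleOf_mem_cycleFactorsFinset_iff.2 (mem_support.2 h)⟩

lemma clsMap_fixed {σ : Perm (Fin r)} {x : Fin r} (hx : σ x = x) :
    clsMap σ x = Sum.inr ⟨x, hx⟩ := by classical exact dif_pos hx

lemma clsMap_not {σ : Perm (Fin r)} {x : Fin r} (hx : ¬ σ x = x) :
    clsMap σ x = Sum.inl ⟨σ.cycleOf x,
      cycleOf_mem_cycleFactorsFinset_iff.2 (mem_support.2 hx)⟩ := by
  classical exact dif_neg hx

noncomputable def cycleQuotEquiv (σ : Perm (Fin r)) :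
    Quotient (scSetoid σ) ≃ ({c // c ∈ σ.cycleFactorsFinset} ⊕ {x : Fin r // σ x = x}) := by
  classical
  refine Equiv.ofBijective (Quotient.lift (clsMap σ) ?_) ⟨?_, ?_⟩
  · intro x y (hxy : σ.SameCycle x y)
    by_cases hx : σ x = x
    · have := sameCycle_eq_of_fixed hxy hx
      subst this; rfl
    · have hy : ¬ σ y = y := fun hy => hx (by
        have hxy2 := sameCycle_eq_of_fixed hxy.symm hy
        rw [hxy2]; exact hy)
      rw [clsMap_not hx, clsMap_not hy]
      exact congrArg Sum.inl (Subtype.ext hxy.cycleOf_eq)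
  · rintro ⟨x⟩ ⟨y⟩ h
    have h' : clsMap σ x = clsMap σ y := h
    apply Quotient.sound
    show σ.SameCycle x y
    by_cases hx : σ x = x <;> by_cases hy : σ y = y
    · rw [clsMap_fixed hx, clsMap_fixed hy] at h'
      simp only [Sum.inr.injEq, Subtype.mk.injEq] at h'
      exact h' ▸ SameCycle.refl _ _
    · rw [clsMap_fixed hx, clsMap_not hy] at h'; exact absurd h' (by simp)
    · rw [clsMap_not hx, clsMap_fixed hy] at h'; exact absurd h' (by simp)
    · rw [clsMap_not hx, clsMap_not hy] at h'
      simp only [Sum.inl.injEq, Subtype.mk.injEq] at h'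
      have : y ∈ (σ.cycleOf x).support := by
        rw [h', mem_support_cycleOf_iff]
        exact ⟨SameCycle.refl _ _, mem_support.2 hy⟩
      exact (mem_support_cycleOf_iff.1 this).1
  · rintro (⟨c, hc⟩ | ⟨x, hx⟩)
    · obtain ⟨a, ha⟩ := IsCycle.nonempty_support (mem_cycleFactorsFinset_iff.mp hc).1
      have hca : c = σ.cycleOf a := cycle_is_cycleOf ha hc
      have haa : ¬ σ a = a := mem_support.1 (mem_cycleFactorsFinset_support_le hc ha)
      refine ⟨⟦a⟧, ?_⟩
      show clsMap σ a = _
      rw [clsMap_not haa]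
      exact congrArg Sum.inl (Subtype.ext hca.symm)
    · refine ⟨⟦x⟧, ?_⟩
      show clsMap σ x = _
      rw [clsMap_fixed hx]

lemma numCycles_eq_card_quot (σ : Perm (Fin r)) :
    numCycles σ = Nat.card (Quotient (scSetoid σ)) := by
  classical
  rw [Nat.card_congr (cycleQuotEquiv σ), Nat.card_sum]
  have h1 : Nat.card {c // c ∈ σ.cycleFactorsFinset} = σ.cycleType.card := by
    rw [Nat.card_eq_fintype_card, Fintype.card_coe, cycleType_def, Multiset.card_map]
    rfl
  have h2 : Nat.card {x : Fin r // σ x = x} = r - σ.support.card := by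
    rw [Nat.card_eq_fintype_card, Fintype.card_subtype]
    have key := Finset.card_filter_add_card_filter_not
      (s := (Finset.univ : Finset (Fin r))) (p := fun x => σ x = x)
    have hsupp : Finset.filter (fun x => ¬ σ x = x) Finset.univ = σ.support := by
      ext x; simp [mem_support]
    rw [hsupp] at key
    simp only [Finset.card_univ, Fintype.card_fin] at key
    omega
  rw [h1, h2, numCycles]




section Part2
variable {r : ℕ}




lemma pairing_support {π : Perm (Fin r)} (hπ : IsPairing π) :
    π.support = Finset.univ :=
  Finset.eq_univ_iff_forall.2 fun x => mem_support.2 (hπ.2 x)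

lemma pairing_orderOf {π : Perm (Fin r)} (hr : 1 ≤ r) (hπ : IsPairing π) :
    orderOf π = 2 := by
  refine orderOf_eq_prime ?_ ?_
  · rw [sq]; exact hπ.1
  · intro h
    exact hπ.2 ⟨0, hr⟩ (by rw [h]; rfl)

lemma pairing_cycleType_card {π : Perm (Fin r)} (hr : 1 ≤ r) (hπ : IsPairing π) :
    2 * π.cycleType.card = r := by
  have h2 : ∀ x ∈ π.cycleType, x = 2 := by
    intro x hx
    have hdvd : x ∣ 2 := by
      rw [← pairing_orderOf hr hπ, ← lcm_cycleType]
      exact Multiset.dvd_lcm hx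
    have h1 := two_le_of_mem_cycleType hx
    have h2 := Nat.le_of_dvd (by norm_num) hdvd
    omega
  have hsum : π.cycleType.sum = r := by
    rw [sum_cycleType, pairing_support hπ, Finset.card_univ, Fintype.card_fin]
  have hrep : π.cycleType = Multiset.replicate (Multiset.card π.cycleType) 2 :=
    Multiset.eq_replicate_of_mem h2
  calc 2 * Multiset.card π.cycleType
      = (Multiset.replicate (Multiset.card π.cycleType) 2).sum := by
        rw [Multiset.sum_replicate, smul_eq_mul, mul_comm]
    _ = π.cycleType.sum := by rw [← hrep]
    _ = r := hsum

lemma pairing_sign {π : Perm (Fin r)} (hr : 1 ≤ r) (hπ : IsPairing π) :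
    Perm.sign π = (-1 : ℤˣ) ^ (r + r / 2) := by
  have hc := pairing_cycleType_card hr hπ
  rw [sign_of_cycleType, sum_cycleType, pairing_support hπ, Finset.card_univ,
    Fintype.card_fin]
  congr 1
  omega

lemma parity_lemma {π : Perm (Fin r)} (hr : 1 ≤ r) (hre : Even r) (hπ : IsPairing π) :
    numCycles (finRotate r * π) % 2 = (r / 2 + 1) % 2 := by
  set σ := finRotate r * π with hσ
  have hs1 : Perm.sign σ = (-1 : ℤˣ) ^ (σ.cycleType.sum + σ.cycleType.card) :=
    sign_of_cycleType σ
  have hs2 : Perm.sign σ = (-1 : ℤˣ) ^ ((r - 1) + (r + r / 2)) := by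
    obtain ⟨m, hm⟩ : ∃ m, r = m + 1 := ⟨r - 1, by omega⟩
    rw [hσ, map_mul, pairing_sign hr hπ, hm, sign_finRotate, ← pow_add]
  have key : (-1 : ℤˣ) ^ ((σ.cycleType.sum + σ.cycleType.card) + ((r - 1) + (r + r / 2))) = 1 := by
    rw [pow_add, ← hs1, ← hs2, ← sq]
    exact Int.units_sq _
  rw [neg_one_pow_eq_one_iff_even (by decide)] at key
  have hsum : σ.cycleType.sum = σ.support.card := sum_cycleType σ
  have hle : σ.support.card ≤ r := by
    simpa using Finset.card_le_univ σ.support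
  rw [Nat.even_iff] at key hre
  rw [numCycles, ← hsum]
  omega

end Part2


lemma rot_val {m : ℕ} (hm : 1 ≤ m) (x : Fin m) :
    (finRotate m x).val = (x.val + 1) % m := by
  obtain ⟨k, rfl⟩ : ∃ k, m = k + 1 := ⟨m - 1, by omega⟩
  rw [finRotate_succ_apply, Fin.add_def, Fin.val_one']
  show (x.val + 1 % (k+1)) % (k+1) = (x.val + 1) % (k+1)
  conv_rhs => rw [Nat.add_mod]
  rw [Nat.add_mod x.val (1 % (k+1)), Nat.mod_mod_of_dvd _ dvd_rfl]

lemma sc_quot_eq {r : ℕ} {σ : Perm (Fin r)} {x y : Fin r} (h : σ.SameCycle x y) :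
    (Quotient.mk (⟨σ.SameCycle, ⟨SameCycle.refl _, SameCycle.symm, SameCycle.trans⟩⟩ : Setoid (Fin r)) x)
      = Quotient.mk _ y := Quotient.sound h

lemma sameCycle_app {α : Type*} (τ : Equiv.Perm α) (x : α) : τ.SameCycle x (τ x) :=
  ⟨1, by simp⟩

lemma sameCycle_app2 {α : Type*} (τ : Equiv.Perm α) (x : α) : τ.SameCycle x (τ (τ x)) :=
  ⟨2, by rw [zpow_two, Equiv.Perm.mul_apply]⟩

lemma nat_card_option (β : Type*) [Finite β] : Nat.card (Option β) = Nat.card β + 1 := by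
  haveI := Fintype.ofFinite β
  rw [Nat.card_eq_fintype_card, Nat.card_eq_fintype_card, Fintype.card_option]

lemma reduction {n : ℕ} (hn : 2 ≤ n) (π : Perm (Fin (n+2))) (hπ : IsPairing π)
    (i : Fin (n+2)) (hi : i ≠ 0) (hfix : (finRotate (n+2) * π) i = i) :
    ∃ π' : Perm (Fin n), IsPairing π' ∧
      numCycles (finRotate (n+2) * π) = numCycles (finRotate n * π') + 1 ∧
      (IsNonCrossing π ↔ IsNonCrossing π') := by
  classical
  have hinv : ∀ x, π (π x) = x := fun x => by
    have h := Equiv.ext_iff.1 hπ.1 x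
    simpa [Perm.mul_apply] using h
  set M : ℕ := (π i).val with hM_def
  have hσi : finRotate (n+2) (π i) = i := by simpa [Perm.mul_apply] using hfix
  have hIv : i.val = M + 1 := by
    have h1 := rot_val (by omega) (π i)
    rw [hσi] at h1
    have h2 : M < n + 2 := (π i).isLt
    have h3 : i.val < n + 2 := i.isLt
    have h4 : i.val ≠ 0 := fun h => hi (Fin.val_inj.1 (by simp [h]))
    rw [← hM_def] at h1
    have h6 : (M + 1) % (n + 2) = if M + 1 = n + 2 then 0 else M + 1 := by
      split
      · next hh => rw [hh, Nat.mod_self]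
      · exact Nat.mod_eq_of_lt (by omega)
    rw [h6] at h1
    split at h1 <;> omega
  have hM : M ≤ n := by
    have := i.isLt; omega
  have hAi : π (π i) = i := hinv i
  -- the maps
  set e : Fin n → Fin (n+2) :=
    fun x => ⟨if x.val < M then x.val else x.val + 2, by have := x.isLt; split <;> omega⟩ with he_def
  set f : Fin (n+2) → Fin n :=
    fun j => ⟨if j.val < M then j.val else j.val - 2, by have := j.isLt; split <;> omega⟩ with hf_def
  have he_val : ∀ x, (e x).val = if x.val < M then x.val else x.val + 2 := fun _ => rfl
  have hf_val : ∀ j, (f j).val = if j.val < M then j.val else j.val - 2 := fun _ => rfl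
  have hef : ∀ x, f (e x) = x := by
    intro x
    apply Fin.val_inj.1
    rw [hf_val, he_val]
    have := x.isLt
    split_ifs <;> omega
  have hfe : ∀ j, j.val ≠ M → j.val ≠ M + 1 → e (f j) = j := by
    intro j h1 h2
    apply Fin.val_inj.1
    rw [he_val, hf_val]
    have := j.isLt
    split_ifs <;> omega
  have he_good : ∀ x, (e x).val ≠ M ∧ (e x).val ≠ M + 1 := by
    intro x
    rw [he_val]
    split <;> omega
  have hgood_π : ∀ j : Fin (n+2), j.val ≠ M → j.val ≠ M + 1 →
      (π j).val ≠ M ∧ (π j).val ≠ M + 1 := by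
    intro j h1 h2
    constructor
    · intro h
      have : π j = π i := Fin.val_inj.1 (by rw [h, hM_def])
      have := π.injective this
      exact h2 (by rw [this]; exact hIv)
    · intro h
      have : π j = i := Fin.val_inj.1 (by rw [h, hIv])
      have hj : j = π i := by rw [← this, hinv]
      exact h1 (by rw [hj])
  -- the reduced pairing
  have hinvol : Function.Involutive (fun x => f (π (e x))) := by
    intro x
    have hg := he_good x
    have hg2 := hgood_π _ hg.1 hg.2
    show f (π (e (f (π (e x))))) = x
    rw [hfe _ hg2.1 hg2.2, hinv, hef]
  set π' : Perm (Fin n) := hinvol.toPerm _ with hπ'_def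
  have hπ'_apply : ∀ x, π' x = f (π (e x)) := fun _ => rfl
  have hπ'_pairing : IsPairing π' := by
    constructor
    · ext x
      exact congrArg Fin.val (hinvol x)
    · intro x hx
      rw [hπ'_apply] at hx
      have hg := he_good x
      have hg2 := hgood_π _ hg.1 hg.2
      have : e (f (π (e x))) = e x := by rw [hx]
      rw [hfe _ hg2.1 hg2.2] at this
      exact hπ.2 _ this
  -- sigma and sigma'
  set σ : Perm (Fin (n+2)) := finRotate (n+2) * π with hσ_def
  set σ' : Perm (Fin n) := finRotate n * π' with hσ'_def
  have hσ_val : ∀ j, (σ j).val = ((π j).val + 1) % (n + 2) := fun j => by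
    rw [hσ_def, Perm.mul_apply, rot_val (by omega)]
  have hσ'_val : ∀ x, (σ' x).val = ((π' x).val + 1) % n := fun x => by
    rw [hσ'_def, Perm.mul_apply, rot_val (by omega)]
  have hmod : ∀ v, v < n + 2 → (v + 1) % (n + 2) = if v = n + 1 then 0 else v + 1 := by
    intro v hv
    split
    · next hh => rw [hh]; exact Nat.mod_self _
    · exact Nat.mod_eq_of_lt (by omega)
  have hmod' : ∀ v, v < n → (v + 1) % n = if v = n - 1 then 0 else v + 1 := by
    intro v hv
    split
    · next hh => rw [hh, Nat.sub_add_cancel (by omega)]; exact Nat.mod_self _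
    · exact Nat.mod_eq_of_lt (by omega)
  have hσfix : σ i = i := hfix
  have hKC0 : ∀ j : Fin (n+2), j.val ≠ M + 1 → (σ j).val ≠ M + 1 := by
    intro j hj h
    have h1 : σ j = i := Fin.val_inj.1 (by rw [h, hIv])
    have : j = i := σ.injective (by rw [h1, hσfix])
    exact hj (by rw [this, hIv])
  have hπ'f : ∀ j : Fin (n+2), j.val ≠ M → j.val ≠ M + 1 → π' (f j) = f (π j) := by
    intro j h1 h2
    rw [hπ'_apply, hfe j h1 h2]
  have hσA_val : (σ (π i)).val = (M + 2) % (n + 2) := by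
    rw [hσ_val, hAi, hIv]
  have hσA_good : (σ (π i)).val ≠ M ∧ (σ (π i)).val ≠ M + 1 := by
    rw [hσA_val]
    have h6 : (M + 2) % (n + 2) = if M = n then 0 else M + 2 := by
      split
      · next hh => rw [hh]; exact Nat.mod_self _
      · exact Nat.mod_eq_of_lt (by omega)
    rw [h6]
    split <;> omega
  have hKC1 : ∀ j : Fin (n+2), j.val ≠ M → j.val ≠ M + 1 →
      (σ j).val ≠ M → σ' (f j) = f (σ j) := by
    intro j h1 h2 h3
    have h4 := hKC0 j h2
    have hk := hgood_π j h1 h2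
    have hkb : (π j).val < n + 2 := (π j).isLt
    apply Fin.val_inj.1
    rw [hσ'_val, hπ'f j h1 h2, hf_val, hf_val, hσ_val]
    rw [hσ_val, hmod (π j).val hkb] at h3 h4
    rw [hmod (π j).val hkb]
    have hw : (if (π j).val < M then (π j).val else (π j).val - 2) < n := by split <;> omega
    rw [hmod' _ hw]
    split_ifs at h3 h4 ⊢ <;> omega
  have hKC2 : ∀ j : Fin (n+2), j.val ≠ M → j.val ≠ M + 1 →
      (σ j).val = M → σ' (f j) = f (σ (π i)) ∧ σ (σ j) = σ (π i) := by
    intro j h1 h2 h3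
    have hσja : σ j = π i := Fin.val_inj.1 (by rw [h3, hM_def])
    refine ⟨?_, by rw [hσja]⟩
    have hk := hgood_π j h1 h2
    have hkb : (π j).val < n + 2 := (π j).isLt
    apply Fin.val_inj.1
    rw [hσ'_val, hπ'f j h1 h2, hf_val, hf_val, hσA_val]
    rw [hσ_val, hmod (π j).val hkb] at h3
    have h6 : (M + 2) % (n + 2) = if M = n then 0 else M + 2 := by
      split
      · next hh => rw [hh]; exact Nat.mod_self _
      · exact Nat.mod_eq_of_lt (by omega)
    rw [h6]
    have hw : (if (π j).val < M then (π j).val else (π j).val - 2) < n := by split <;> omega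
    rw [hmod' _ hw]
    split_ifs at h3 ⊢ <;> omega
  -- quotient bijection
  set s : Setoid (Fin (n+2)) := scSetoid σ with hs_def
  set s' : Setoid (Fin n) := scSetoid σ' with hs'_def
  have hq : ∀ {x y : Fin (n+2)}, σ.SameCycle x y → (Quotient.mk s x = Quotient.mk s y) :=
    fun h => Quotient.sound h
  have hq' : ∀ {x y : Fin n}, σ'.SameCycle x y → (Quotient.mk s' x = Quotient.mk s' y) :=
    fun h => Quotient.sound h
  set F : Fin (n+2) → Option (Quotient s') := fun j =>
    if j.val = M + 1 then none
    else if j.val = M then some (Quotient.mk s' (f (σ (π i))))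
    else some (Quotient.mk s' (f j)) with hF_def
  have hF1 : ∀ j : Fin (n+2), j.val = M + 1 → F j = none := by
    intro j h; rw [hF_def]; dsimp only; rw [if_pos h]
  have hF2 : ∀ j : Fin (n+2), j.val ≠ M + 1 → j.val = M →
      F j = some (Quotient.mk s' (f (σ (π i)))) := by
    intro j h1 h2; rw [hF_def]; dsimp only; rw [if_neg h1, if_pos h2]
  have hF3 : ∀ j : Fin (n+2), j.val ≠ M + 1 → j.val ≠ M →
      F j = some (Quotient.mk s' (f j)) := by
    intro j h1 h2; rw [hF_def]; dsimp only; rw [if_neg h1, if_neg h2]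
  have hFstep : ∀ j, F (σ j) = F j := by
    intro j
    by_cases hj1 : j.val = M + 1
    · have : j = i := Fin.val_inj.1 (by rw [hj1, hIv])
      rw [this, hσfix]
    by_cases hj2 : j.val = M
    · have hj : j = π i := Fin.val_inj.1 (by rw [hj2, ← hM_def])
      rw [hF2 j hj1 hj2, hj]
      exact hF3 _ hσA_good.2 hσA_good.1
    · have h4 := hKC0 j hj1
      rw [hF3 j hj1 hj2]
      by_cases hs3 : (σ j).val = M
      · rw [hF2 _ h4 hs3]
        have hk2 := (hKC2 j hj2 hj1 hs3).1
        rw [← hk2]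
        exact congrArg some (hq' (sameCycle_app σ' (f j))).symm
      · rw [hF3 _ h4 hs3, ← hKC1 j hj2 hj1 hs3]
        exact congrArg some (hq' (sameCycle_app σ' (f j))).symm
  have hFiter : ∀ (t : ℕ) (j), F ((σ ^ t) j) = F j := by
    intro t
    induction t with
    | zero => intro j; rw [pow_zero]; rfl
    | succ t ih =>
      intro j
      rw [pow_succ, Perm.mul_apply, ih (σ j), hFstep j]
  have hFwd : ∀ (x y : Fin (n+2)), σ.SameCycle x y → F x = F y := by
    intro x y hxy
    obtain ⟨t, _, ht⟩ := hxy.exists_pow_eq'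
    rw [← ht, hFiter t x]
  set Fbar : Quotient s → Option (Quotient s') := Quotient.lift F hFwd with hFbar_def
  set H : Fin n → Quotient s := fun x => Quotient.mk s (e x) with hH_def
  have hHstep : ∀ x, H (σ' x) = H x := by
    intro x
    have hg := he_good x
    have hgfix : σ' x = σ' (f (e x)) := by rw [hef]
    by_cases hs3 : (σ (e x)).val = M
    · have hk2 := hKC2 (e x) hg.1 hg.2 hs3
      rw [hH_def]
      dsimp only
      rw [hgfix, hk2.1, hfe _ hσA_good.1 hσA_good.2, ← hk2.2]
      exact (hq (sameCycle_app2 σ (e x))).symm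
    · have h4 := hKC0 (e x) hg.2
      rw [hH_def]
      dsimp only
      rw [hgfix, hKC1 (e x) hg.1 hg.2 hs3, hfe _ hs3 h4]
      exact (hq (sameCycle_app σ (e x))).symm
  have hHiter : ∀ (t : ℕ) (x), H ((σ' ^ t) x) = H x := by
    intro t
    induction t with
    | zero => intro x; rw [pow_zero]; rfl
    | succ t ih =>
      intro x
      rw [pow_succ, Perm.mul_apply, ih (σ' x), hHstep x]
  have hHwd : ∀ (x y : Fin n), σ'.SameCycle x y → H x = H y := by
    intro x y hxy
    obtain ⟨t, _, ht⟩ := hxy.exists_pow_eq'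
    rw [← ht, hHiter t x]
  set Hbar : Quotient s' → Quotient s := Quotient.lift H hHwd with hHbar_def
  have hEquiv : Nat.card (Quotient s) = Nat.card (Option (Quotient s')) := by
    refine Nat.card_congr ⟨Fbar, fun o => o.elim (Quotient.mk s i) Hbar, ?_, ?_⟩
    · apply Quotient.ind
      intro j
      by_cases hj1 : j.val = M + 1
      · have hji : j = i := Fin.val_inj.1 (by rw [hj1, hIv])
        have : Fbar (Quotient.mk s j) = none := hF1 j hj1
        rw [this, hji]
        rfl
      by_cases hj2 : j.val = M
      · have hja : j = π i := Fin.val_inj.1 (by rw [hj2, ← hM_def])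
        have : Fbar (Quotient.mk s j) = some (Quotient.mk s' (f (σ (π i)))) := hF2 j hj1 hj2
        rw [this]
        show Hbar (Quotient.mk s' (f (σ (π i)))) = Quotient.mk s j
        show Quotient.mk s (e (f (σ (π i)))) = Quotient.mk s j
        rw [hfe _ hσA_good.1 hσA_good.2, hja]
        exact (hq (sameCycle_app σ (π i))).symm
      · have : Fbar (Quotient.mk s j) = some (Quotient.mk s' (f j)) := hF3 j hj1 hj2
        rw [this]
        show Quotient.mk s (e (f j)) = Quotient.mk s j
        rw [hfe _ hj2 hj1]
    · rintro (_ | q)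
      · show Fbar (Quotient.mk s i) = none
        exact hF1 i hIv
      · induction q using Quotient.ind with
        | _ x =>
          show Fbar (Quotient.mk s (e x)) = some (Quotient.mk s' x)
          have hg := he_good x
          rw [show Fbar (Quotient.mk s (e x)) = F (e x) from rfl, hF3 _ hg.2 hg.1, hef]
  have hnum : numCycles σ = numCycles σ' + 1 := by
    rw [numCycles_eq_card_quot σ, numCycles_eq_card_quot σ', ← hs_def, ← hs'_def,
      hEquiv, nat_card_option]
  -- noncrossing transfer
  have he_mono : ∀ x y : Fin n, x < y → e x < e y := by
    intro x y h
    rw [Fin.lt_def] at h ⊢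
    rw [he_val, he_val]
    split_ifs <;> omega
  have hf_mono : ∀ j k : Fin (n+2), j.val ≠ M → j.val ≠ M + 1 →
      k.val ≠ M → k.val ≠ M + 1 → j < k → f j < f k := by
    intro j k hj1 hj2 hk1 hk2 h
    rw [Fin.lt_def] at h ⊢
    rw [hf_val, hf_val]
    split_ifs <;> omega
  have heπ' : ∀ x, e (π' x) = π (e x) := by
    intro x
    have hg := he_good x
    have hg2 := hgood_π _ hg.1 hg.2
    rw [hπ'_apply, hfe _ hg2.1 hg2.2]
  have hNC : IsNonCrossing π ↔ IsNonCrossing π' := by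
    constructor
    · intro h hex
      apply h
      obtain ⟨x, x', h1, h2, h3⟩ := hex
      refine ⟨e x, e x', he_mono _ _ h1, ?_, ?_⟩
      · rw [← heπ']
        exact he_mono _ _ h2
      · rw [← heπ', ← heπ']
        exact he_mono _ _ h3
    · intro h hex
      apply h
      obtain ⟨p, p', h1, h2, h3⟩ := hex
      rw [Fin.lt_def] at h1 h2 h3
      have hp1 : p.val ≠ M := by
        intro hh
        have hp : p = π i := Fin.val_inj.1 (by rw [hh, ← hM_def])
        have : (π p).val = M + 1 := by rw [hp, hAi, hIv]
        omega
      have hp2 : p.val ≠ M + 1 := by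
        intro hh
        have hp : p = i := Fin.val_inj.1 (by rw [hh, hIv])
        have : (π p).val = M := by rw [hp, ← hM_def]
        omega
      have hp'1 : p'.val ≠ M := by
        intro hh
        have hp : p' = π i := Fin.val_inj.1 (by rw [hh, ← hM_def])
        have : (π p').val = M + 1 := by rw [hp, hAi, hIv]
        omega
      have hp'2 : p'.val ≠ M + 1 := by
        intro hh
        have hp : p' = i := Fin.val_inj.1 (by rw [hh, hIv])
        have : (π p').val = M := by rw [hp, ← hM_def]
        omega
      have hg1 := hgood_π _ hp1 hp2
      have hg2 := hgood_π _ hp'1 hp'2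
      refine ⟨f p, f p', hf_mono _ _ hp1 hp2 hp'1 hp'2 (Fin.lt_def.2 h1), ?_, ?_⟩
      · rw [hπ'f p hp1 hp2]
        exact hf_mono _ _ hp'1 hp'2 hg1.1 hg1.2 (Fin.lt_def.2 h2)
      · rw [hπ'f p hp1 hp2, hπ'f p' hp'1 hp'2]
        exact hf_mono _ _ hg1.1 hg1.2 hg2.1 hg2.2 (Fin.lt_def.2 h3)
  exact ⟨π', hπ'_pairing, hnum, hNC⟩


lemma rot_val' {m : ℕ} (hm : 1 ≤ m) (x : Fin m) :
    (finRotate m x).val = (x.val + 1) % m := by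
  obtain ⟨k, rfl⟩ : ∃ k, m = k + 1 := ⟨m - 1, by omega⟩
  rw [finRotate_succ_apply, Fin.add_def, Fin.val_one']
  show (x.val + 1 % (k+1)) % (k+1) = (x.val + 1) % (k+1)
  conv_rhs => rw [Nat.add_mod]
  rw [Nat.add_mod x.val (1 % (k+1)), Nat.mod_mod_of_dvd _ dvd_rfl]

lemma noncrossing_exists_fix {r : ℕ} (hr : 2 ≤ r) (π : Perm (Fin r)) (hπ : IsPairing π)
    (hnc : IsNonCrossing π) :
    ∃ k : Fin r, k.val ≠ 0 ∧ (finRotate r * π) k = k := by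
  classical
  have hinv : ∀ x, π (π x) = x := fun x => by
    have h := Equiv.ext_iff.1 hπ.1 x
    simpa [Perm.mul_apply] using h
  set T : Finset (Fin r) := Finset.univ.filter (fun j => j.val < (π j).val) with hT
  have hT0 : (⟨0, by omega⟩ : Fin r) ∈ T := by
    rw [hT, Finset.mem_filter]
    refine ⟨Finset.mem_univ _, ?_⟩
    have h1 := hπ.2 ⟨0, by omega⟩
    have h2 : (π ⟨0, by omega⟩).val ≠ 0 := fun h => h1 (Fin.val_inj.1 (by rw [h]))
    have h3 : ((⟨0, by omega⟩ : Fin r)).val = 0 := rfl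
    omega
  obtain ⟨i, hiT, hmin⟩ := T.exists_min_image (fun j => (π j).val - j.val) ⟨_, hT0⟩
  have hi : i.val < (π i).val := by
    rw [hT, Finset.mem_filter] at hiT
    exact hiT.2
  by_cases hadj : (π i).val = i.val + 1
  · refine ⟨π i, by omega, ?_⟩
    apply Fin.val_inj.1
    have hπlt := (π i).isLt
    rw [Perm.mul_apply, hinv, rot_val' (by omega), hadj]
    exact Nat.mod_eq_of_lt (by omega)
  · exfalso
    have h2 : i.val + 1 < (π i).val := by omega
    have hπlt := (π i).isLt
    set j : Fin r := ⟨i.val + 1, by omega⟩ with hj_def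
    have hjv : j.val = i.val + 1 := rfl
    have hji : j ≠ i := by
      intro h
      have := congrArg Fin.val h
      omega
    have hπji : π j ≠ π i := fun h => hji (π.injective h)
    have hπj_ne_i : π j ≠ i := by
      intro h
      have : j = π i := by rw [← h, hinv]
      have := congrArg Fin.val this
      omega
    rcases lt_trichotomy j.val (π j).val with hlt | heq | hgt
    · rcases lt_trichotomy (π j).val (π i).val with hlt2 | heq2 | hgt2
      · have hjT : j ∈ T := by rw [hT, Finset.mem_filter]; exact ⟨Finset.mem_univ _, hlt⟩
        have := hmin j hjT
        omega
      · exact hπji (Fin.val_inj.1 heq2)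
      · exact hnc ⟨i, j, Fin.lt_def.2 (by omega), Fin.lt_def.2 (by omega),
          Fin.lt_def.2 (by omega)⟩
    · exact hπ.2 j (Fin.val_inj.1 heq.symm)
    · have hπjlt : (π j).val < i.val := by
        have : (π j).val ≠ i.val := fun h => hπj_ne_i (Fin.val_inj.1 h)
        omega
      refine hnc ⟨π j, i, Fin.lt_def.2 (by omega), ?_, ?_⟩
      · rw [hinv]
        exact Fin.lt_def.2 (by omega)
      · rw [hinv]
        exact Fin.lt_def.2 (by omega)

lemma numCycles_le_of_fix {r : ℕ} (hr : 1 ≤ r) (σ : Perm (Fin r))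
    (hfix : ∀ k : Fin r, k.val ≠ 0 → σ k ≠ k) :
    2 * numCycles σ ≤ r + 1 := by
  classical
  have h1 : Multiset.card σ.cycleType • 2 ≤ σ.cycleType.sum :=
    Multiset.card_nsmul_le_sum (fun x hx => two_le_of_mem_cycleType hx)
  have h2 : σ.cycleType.sum = σ.support.card := sum_cycleType σ
  have h3 : r - 1 ≤ σ.support.card := by
    have hsub : Finset.univ.erase (⟨0, by omega⟩ : Fin r) ⊆ σ.support := by
      intro x hx
      rw [Finset.mem_erase] at hx
      have : x.val ≠ 0 := fun h => hx.1 (Fin.val_inj.1 (by rw [h]))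
      exact mem_support.2 (hfix x this)
    have := Finset.card_le_card hsub
    rw [Finset.card_erase_of_mem (Finset.mem_univ _), Finset.card_univ,
      Fintype.card_fin] at this
    omega
  have h4 : σ.support.card ≤ r := by
    simpa using Finset.card_le_univ σ.support
  rw [numCycles]
  simp only [smul_eq_mul] at h1
  omega


lemma base_two (π : Perm (Fin 2)) (hπ : IsPairing π) :
    numCycles (finRotate 2 * π) = 2 ∧ IsNonCrossing π := by
  have hinv : ∀ x, π (π x) = x := fun x => by
    have h := Equiv.ext_iff.1 hπ.1 x
    simpa [Perm.mul_apply] using h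
  have hσ1 : finRotate 2 * π = 1 := by
    ext x
    show ((finRotate 2) (π x)).val = x.val
    rw [rot_val' (by omega)]
    have h1 := (π x).isLt
    have h2 := x.isLt
    have h3 : (π x).val ≠ x.val := fun h => hπ.2 x (Fin.val_inj.1 h)
    omega
  constructor
  · rw [hσ1]
    simp [numCycles]
  · rintro ⟨p, p', h1, h2, h3⟩
    rw [Fin.lt_def] at h1 h2 h3
    have := p.isLt
    have := p'.isLt
    have := (π p).isLt
    omega

lemma mainQ : ∀ r : ℕ, 2 ≤ r → Even r → ∀ π : Perm (Fin r), IsPairing π →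
    numCycles (finRotate r * π) ≤ r / 2 + 1 ∧
    (numCycles (finRotate r * π) = r / 2 + 1 ↔ IsNonCrossing π) := by
  intro r
  induction r using Nat.strong_induction_on with
  | _ r ih =>
    intro hr hre π hπ
    rw [Nat.even_iff] at hre
    by_cases hr2 : r = 2
    · subst hr2
      obtain ⟨h1, h2⟩ := base_two π hπ
      exact ⟨by omega, by rw [h1]; exact ⟨fun _ => h2, fun _ => rfl⟩⟩
    · have hr4 : 4 ≤ r := by omega
      obtain ⟨n, rfl⟩ : ∃ n, r = n + 2 := ⟨r - 2, by omega⟩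
      by_cases hfix : ∃ k : Fin (n+2), k.val ≠ 0 ∧ (finRotate (n+2) * π) k = k
      · obtain ⟨k, hk0, hkfix⟩ := hfix
        have hk0' : k ≠ 0 := fun h => hk0 (by rw [h]; rfl)
        obtain ⟨π', hπ'p, hnum, hnciff⟩ := reduction (by omega) π hπ k hk0' hkfix
        have ihres := ih n (by omega) (by omega) (Nat.even_iff.2 (by omega)) π' hπ'p
        constructor
        · omega
        · have harith : numCycles (finRotate n * π') + 1 = (n+2)/2 + 1 ↔
              numCycles (finRotate n * π') = n/2 + 1 := by omega
          rw [hnum, harith, ihres.2]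
          exact hnciff.symm
      · push_neg at hfix
        have hnc' : ¬ IsNonCrossing π := by
          intro hnc
          obtain ⟨k, hk0, hkfix⟩ := noncrossing_exists_fix (by omega) π hπ hnc
          exact hfix k hk0 hkfix
        have hle := numCycles_le_of_fix (by omega) (finRotate (n+2) * π) (by
          intro k hk hkk
          exact hfix k hk hkk)
        exact ⟨by omega, ⟨fun h => by omega, fun h => absurd h hnc'⟩⟩

theorem stmt2 (r : ℕ) (hr : 2 ≤ r) (hre : Even r) (π : Equiv.Perm (Fin r))
    (hπ : IsPairing π) :
    pairingGenus π = 0 ↔ IsNonCrossing π := by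
  obtain ⟨hle, hiff⟩ := mainQ r hr hre π hπ
  have hpar := parity_lemma (by omega) hre hπ
  rw [pairingGenus]
  rw [Nat.even_iff] at hre
  constructor
  · intro h
    have hc : numCycles (finRotate r * π) = r / 2 + 1 := by omega
    exact hiff.1 hc
  · intro h
    have hc := hiff.2 h
    omega
end

section
/- Let U_t := P(X_t) ⊗ Q(X_t) for a γ-Hölder path X in the algebra A = ℂ^{d×d} and polynomials P, Q. Then U is a controlled biprocess: its increments expand as (δU)_{st} = (δX)_{st} ♯ 𝒰^{X,1}_s + 𝒰^{X,2}_s ♯ (δX)_{st} + U♭_{st} with 𝒰^{X,1}_s = ∂P(X_s) ⊗ Q(X_s), 𝒰^{X,2}_s = P(X_s) ⊗ ∂Q(X_s), and a remainder U♭ that is 2γ-Hölder. -/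
open Finset Polynomial


/-- `d × d` complex matrices. -/
abbrev Mat (d : ℕ) := Matrix (Fin d) (Fin d) ℂ

/-- Coefficient representation of an element of `A ⊗ A`, `A = ℂ^{d×d}`. -/
abbrev Tens (d : ℕ) := (Fin d × Fin d) → (Fin d × Fin d) → ℂ

/-- Coefficient representation of an element of `A ⊗ A ⊗ A`. -/
abbrev Tens3 (d : ℕ) := (Fin d × Fin d) → (Fin d × Fin d) → (Fin d × Fin d) → ℂ

/-- The elementary tensor `A ⊗ B`. -/
noncomputable def tensOf {d : ℕ} (A B : Mat d) : Tens d :=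
  fun p q => A p.1 p.2 * B q.1 q.2

/-- `Y ♯ 𝒰`, linear extension of `Y ♯ (U₁ ⊗ U₂ ⊗ U₃) = (U₁ Y U₂) ⊗ U₃`. -/
noncomputable def sharpLeft {d : ℕ} (Y : Mat d) (U : Tens3 d) : Tens d :=
  fun a c => ∑ j, ∑ k, U (a.1, j) (k, a.2) c * Y j k

/-- `𝒰 ♯ Y`, linear extension of `(U₁ ⊗ U₂ ⊗ U₃) ♯ Y = U₁ ⊗ (U₂ Y U₃)`. -/
noncomputable def sharpRight {d : ℕ} (U : Tens3 d) (Y : Mat d) : Tens d :=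
  fun a c => ∑ j, ∑ k, U a (c.1, j) (k, c.2) * Y j k

/-- The non-commutative derivative `∂P(X)`, linear extension of
`∂X^m = Σ_{i=0}^{m-1} X^i ⊗ X^{m-1-i}`. -/
noncomputable def ncDeriv {d : ℕ} (P : Polynomial ℂ) (X : Mat d) : Tens d :=
  ∑ m ∈ P.support, P.coeff m • ∑ i ∈ Finset.range m, tensOf (X ^ i) (X ^ (m - 1 - i))

/-- Two-parameter smallness predicate on `[0,1]`. -/
def Sm (α : ℝ) (F : ℝ → ℝ → ℂ) : Prop :=
  ∃ K : ℝ, 0 ≤ K ∧ ∀ s t : ℝ, 0 ≤ s → s ≤ t → t ≤ 1 →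
    ‖F s t‖ ≤ K * (t - s) ^ α

lemma rpow_nn {s t : ℝ} (α : ℝ) (hst : s ≤ t) : 0 ≤ (t - s) ^ α :=
  Real.rpow_nonneg (sub_nonneg.2 hst) α

lemma rpow_le_one' {s t α : ℝ} (hα : 0 ≤ α) (hs : 0 ≤ s) (hst : s ≤ t) (ht : t ≤ 1) :
    (t - s) ^ α ≤ 1 :=
  Real.rpow_le_one (by linarith) (by linarith) hα

lemma Sm.congr {α : ℝ} {F G : ℝ → ℝ → ℂ}
    (h : ∀ s t : ℝ, 0 ≤ s → s ≤ t → t ≤ 1 → F s t = G s t) (hF : Sm α F) : Sm α G := by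
  obtain ⟨K, hK, hb⟩ := hF
  exact ⟨K, hK, fun s t hs hst ht => by rw [← h s t hs hst ht]; exact hb s t hs hst ht⟩

lemma Sm.add {α : ℝ} {F G : ℝ → ℝ → ℂ} (hF : Sm α F) (hG : Sm α G) :
    Sm α fun s t => F s t + G s t := by
  obtain ⟨K, hK, hb⟩ := hF; obtain ⟨L, hL, hc⟩ := hG
  refine ⟨K + L, by linarith, fun s t hs hst ht => ?_⟩
  calc ‖F s t + G s t‖ ≤ ‖F s t‖ + ‖G s t‖ :=
        norm_add_le _ _
    _ ≤ K * (t - s) ^ α + L * (t - s) ^ α := add_le_add (hb s t hs hst ht) (hc s t hs hst ht)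
    _ = (K + L) * (t - s) ^ α := by ring

lemma Sm.const_mul {α : ℝ} {F : ℝ → ℝ → ℂ} (c : ℂ) (hF : Sm α F) :
    Sm α fun s t => c * F s t := by
  obtain ⟨K, hK, hb⟩ := hF
  refine ⟨‖c‖ * K, by positivity, fun s t hs hst ht => ?_⟩
  rw [norm_mul, mul_assoc]
  exact mul_le_mul_of_nonneg_left (hb s t hs hst ht) (norm_nonneg _)

lemma Sm.sub {α : ℝ} {F G : ℝ → ℝ → ℂ} (hF : Sm α F) (hG : Sm α G) :
    Sm α fun s t => F s t - G s t := by
  have := hF.add (hG.const_mul (-1))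
  exact this.congr (by intro s t _ _ _; simp; ring) |>.congr (fun s t _ _ _ => rfl)

lemma Sm.mul {α β : ℝ} {F G : ℝ → ℝ → ℂ} (h : α + β ≠ 0) (hF : Sm α F) (hG : Sm β G) :
    Sm (α + β) fun s t => F s t * G s t := by
  obtain ⟨K, hK, hb⟩ := hF; obtain ⟨L, hL, hc⟩ := hG
  refine ⟨K * L, by positivity, fun s t hs hst ht => ?_⟩
  rw [norm_mul, Real.rpow_add' (by linarith) h]
  calc ‖F s t‖ * ‖G s t‖ ≤ (K * (t - s) ^ α) * (L * (t - s) ^ β) :=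
        mul_le_mul (hb s t hs hst ht) (hc s t hs hst ht) (norm_nonneg _)
          (mul_nonneg hK (rpow_nn α hst))
    _ = K * L * ((t - s) ^ α * (t - s) ^ β) := by ring

lemma Sm.mul00 {F G : ℝ → ℝ → ℂ} (hF : Sm 0 F) (hG : Sm 0 G) :
    Sm 0 fun s t => F s t * G s t := by
  obtain ⟨K, hK, hb⟩ := hF; obtain ⟨L, hL, hc⟩ := hG
  refine ⟨K * L, by positivity, fun s t hs hst ht => ?_⟩
  have h1 := hb s t hs hst ht; have h2 := hc s t hs hst ht
  rw [Real.rpow_zero] at *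
  rw [norm_mul]
  calc ‖F s t‖ * ‖G s t‖ ≤ (K * 1) * (L * 1) :=
        mul_le_mul h1 h2 (norm_nonneg _) (by linarith [norm_nonneg (F s t)])
    _ = K * L * 1 := by ring

lemma Sm.const (c : ℂ) : Sm 0 fun _ _ => c :=
  ⟨‖c‖, norm_nonneg _, fun s t _ _ _ => by simp⟩

lemma Sm.zero {α : ℝ} : Sm α fun _ _ => (0 : ℂ) :=
  ⟨0, le_refl 0, fun s t _ hst _ => by simp⟩

lemma Sm.sum {α : ℝ} {ι : Type*} (s : Finset ι) (F : ι → ℝ → ℝ → ℂ)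
    (h : ∀ i ∈ s, Sm α (F i)) : Sm α fun u v => ∑ i ∈ s, F i u v := by
  classical
  induction s using Finset.induction_on with
  | empty => exact Sm.zero.congr (by intro s t _ _ _; simp) |>.congr (fun _ _ _ _ _ => rfl)
  | @insert a s' hni ih =>
    have := (h a (mem_insert_self a s')).add (ih fun i hi => h i (mem_insert_of_mem hi))
    exact this.congr (by intro u v _ _ _; rw [Finset.sum_insert hni])

lemma Sm.to0 {α : ℝ} {F : ℝ → ℝ → ℂ} (hα : 0 ≤ α) (h : Sm α F) : Sm 0 F := by
  obtain ⟨K, hK, hb⟩ := h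
  refine ⟨K, hK, fun s t hs hst ht => ?_⟩
  rw [Real.rpow_zero, mul_one]
  exact (hb s t hs hst ht).trans <| by
    calc K * (t - s) ^ α ≤ K * 1 := mul_le_mul_of_nonneg_left (rpow_le_one' hα hs hst ht) hK
      _ = K := mul_one K

/-- One-parameter Hölder-with-bound predicate. -/
def HoldF (γ : ℝ) (f : ℝ → ℂ) : Prop :=
  Sm γ (fun s t => f t - f s) ∧ Sm 0 (fun _ t => f t)

lemma HoldF.src {γ : ℝ} {f : ℝ → ℂ} (hγ : 0 ≤ γ) (h : HoldF γ f) :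
    Sm 0 fun s _ => f s :=
  (h.2.sub (h.1.to0 hγ)).congr (by intro s t _ _ _; ring)

lemma HoldF.congr {γ : ℝ} {f g : ℝ → ℂ} (h : ∀ u, f u = g u) (hf : HoldF γ f) : HoldF γ g := by
  have : f = g := funext h
  rwa [this] at hf

lemma HoldF.const {γ : ℝ} (c : ℂ) : HoldF γ fun _ => c :=
  ⟨Sm.zero.congr (by intro s t _ _ _; simp), Sm.const c⟩

lemma HoldF.add {γ : ℝ} {f g : ℝ → ℂ} (hf : HoldF γ f) (hg : HoldF γ g) :
    HoldF γ fun u => f u + g u :=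
  ⟨(hf.1.add hg.1).congr (by intro s t _ _ _; ring), hf.2.add hg.2⟩

lemma HoldF.mul {γ : ℝ} (hγ : 0 < γ) {f g : ℝ → ℂ} (hf : HoldF γ f) (hg : HoldF γ g) :
    HoldF γ fun u => f u * g u := by
  constructor
  · have h1 : Sm (γ + 0) fun s t => (f t - f s) * g t := Sm.mul (by linarith) hf.1 hg.2
    have h2 : Sm (0 + γ) fun s t => f s * (g t - g s) :=
      Sm.mul (by linarith) (hf.src hγ.le) hg.1
    rw [add_zero] at h1; rw [zero_add] at h2
    exact (h1.add h2).congr (by intro s t _ _ _; ring)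
  · exact hf.2.mul00 hg.2

lemma HoldF.const_mul {γ : ℝ} (c : ℂ) {f : ℝ → ℂ} (hf : HoldF γ f) :
    HoldF γ fun u => c * f u :=
  ⟨(hf.1.const_mul c).congr (by intro s t _ _ _; ring), hf.2.const_mul c⟩

lemma HoldF.sum {γ : ℝ} {ι : Type*} (s : Finset ι) (f : ι → ℝ → ℂ)
    (h : ∀ i ∈ s, HoldF γ (f i)) : HoldF γ fun u => ∑ i ∈ s, f i u := by
  constructor
  · exact (Sm.sum s (fun i s t => f i t - f i s) fun i hi => (h i hi).1).congr
      (by intro s' t _ _ _; rw [Finset.sum_sub_distrib])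
  · exact Sm.sum s (fun i _ t => f i t) fun i hi => (h i hi).2

section Matrices
variable {d : ℕ}

lemma holdF_pow {γ : ℝ} (hγ : 0 < γ) {X : ℝ → Mat d}
    (hX : ∀ a b : Fin d, HoldF γ fun u => X u a b) (m : ℕ) :
    ∀ a b : Fin d, HoldF γ fun u => (X u ^ m) a b := by
  induction m with
  | zero =>
    intro a b
    exact (HoldF.const (if a = b then 1 else 0)).congr
      (by intro u; simp [pow_zero, Matrix.one_apply])
  | succ m ih =>
    intro a b
    have : ∀ u, (X u ^ (m + 1)) a b = ∑ j, (X u ^ m) a j * X u j b := by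
      intro u; rw [pow_succ, Matrix.mul_apply]
    exact (HoldF.sum Finset.univ (fun j u => (X u ^ m) a j * X u j b)
      (fun j _ => (ih a j).mul hγ (hX j b))).congr (fun u => (this u).symm)

lemma aeval_support_sum (P : Polynomial ℂ) (M : Mat d) :
    Polynomial.aeval M P = ∑ m ∈ P.support, P.coeff m • M ^ m := by
  rw [aeval_def, eval₂_eq_sum, Polynomial.sum]
  exact Finset.sum_congr rfl fun m _ => (Algebra.smul_def _ _).symm

lemma aeval_entry (P : Polynomial ℂ) (M : Mat d) (a b : Fin d) :
    (Polynomial.aeval M P) a b = ∑ m ∈ P.support, P.coeff m * (M ^ m) a b := by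
  rw [aeval_support_sum, Matrix.sum_apply]
  exact Finset.sum_congr rfl fun m _ => by rw [Matrix.smul_apply, smul_eq_mul]

lemma holdF_aeval {γ : ℝ} (hγ : 0 < γ) {X : ℝ → Mat d}
    (hX : ∀ a b : Fin d, HoldF γ fun u => X u a b) (P : Polynomial ℂ) (a b : Fin d) :
    HoldF γ fun u => (Polynomial.aeval (X u) P) a b := by
  refine (HoldF.sum P.support (fun m u => P.coeff m * (X u ^ m) a b)
    (fun m _ => (holdF_pow hγ hX m a b).const_mul (P.coeff m))).congr
    (fun u => (aeval_entry P (X u) a b).symm)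

lemma ncDeriv_entry (P : Polynomial ℂ) (M : Mat d) (p q : Fin d × Fin d) :
    ncDeriv P M p q =
      ∑ m ∈ P.support, P.coeff m *
        ∑ i ∈ Finset.range m, (M ^ i) p.1 p.2 * (M ^ (m - 1 - i)) q.1 q.2 := by
  simp [ncDeriv, tensOf, Finset.sum_apply, Pi.smul_apply, smul_eq_mul, Finset.mul_sum]

lemma holdF_ncDeriv {γ : ℝ} (hγ : 0 < γ) {X : ℝ → Mat d}
    (hX : ∀ a b : Fin d, HoldF γ fun u => X u a b) (P : Polynomial ℂ) (p q : Fin d × Fin d) :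
    HoldF γ fun u => ncDeriv P (X u) p q := by
  refine (HoldF.sum P.support (fun m u => P.coeff m *
      ∑ i ∈ Finset.range m, (X u ^ i) p.1 p.2 * (X u ^ (m - 1 - i)) q.1 q.2)
    (fun m _ => HoldF.const_mul _ (HoldF.sum (Finset.range m) _
      (fun i _ => (holdF_pow hγ hX i p.1 p.2).mul hγ (holdF_pow hγ hX (m-1-i) q.1 q.2))))).congr
    (fun u => (ncDeriv_entry P (X u) p q).symm)

noncomputable def sharpM (P : Polynomial ℂ) (M H : Mat d) : Mat d :=
  ∑ m ∈ P.support, P.coeff m • ∑ i ∈ Finset.range m, M ^ i * H * M ^ (m - 1 - i)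

lemma telescope (A B : Mat d) (m : ℕ) :
    B ^ m - A ^ m = ∑ i ∈ Finset.range m, A ^ i * (B - A) * B ^ (m - 1 - i) := by
  induction m with
  | zero => simp
  | succ m ih =>
    rw [Finset.sum_range_succ']
    have h0 : A ^ 0 * (B - A) * B ^ (m + 1 - 1 - 0) = (B - A) * B ^ m := by
      simp
    rw [h0]
    have h1 : ∀ i ∈ Finset.range m,
        A ^ (i + 1) * (B - A) * B ^ (m + 1 - 1 - (i + 1)) =
          A * (A ^ i * (B - A) * B ^ (m - 1 - i)) := by
      intro i hi
      have : m + 1 - 1 - (i + 1) = m - 1 - i := by omega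
      rw [this, pow_succ']
      simp only [mul_assoc]
    rw [Finset.sum_congr rfl h1, ← Finset.mul_sum, ← ih, pow_succ', pow_succ', mul_sub,
      sub_mul]
    abel

lemma taylorM (P : Polynomial ℂ) (A B : Mat d) :
    Polynomial.aeval B P - Polynomial.aeval A P - sharpM P A (B - A) =
      ∑ m ∈ P.support, P.coeff m •
        ∑ i ∈ Finset.range m, A ^ i * (B - A) * (B ^ (m - 1 - i) - A ^ (m - 1 - i)) := by
  rw [aeval_support_sum, aeval_support_sum, sharpM, ← Finset.sum_sub_distrib,
    ← Finset.sum_sub_distrib]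
  refine Finset.sum_congr rfl fun m _ => ?_
  rw [← smul_sub, ← smul_sub]
  congr 1
  rw [telescope, ← Finset.sum_sub_distrib]
  refine Finset.sum_congr rfl fun i _ => ?_
  noncomm_ring

lemma swap3 {ι : Type*} (s : Finset ι) (f : ι → Fin d → Fin d → ℂ) :
    ∑ m ∈ s, ∑ j, ∑ k, f m j k = ∑ j, ∑ k, ∑ m ∈ s, f m j k := by
  rw [Finset.sum_comm]
  exact Finset.sum_congr rfl fun j _ => Finset.sum_comm

lemma sharpM_entry (P : Polynomial ℂ) (M H : Mat d) (a b : Fin d) :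
    sharpM P M H a b = ∑ j, ∑ k, ncDeriv P M (a, j) (k, b) * H j k := by
  have lhs : sharpM P M H a b =
      ∑ m ∈ P.support, ∑ i ∈ Finset.range m, ∑ j, ∑ k,
        P.coeff m * ((M ^ i) a j * H j k * (M ^ (m - 1 - i)) k b) := by
    simp only [sharpM, Matrix.sum_apply, Matrix.smul_apply, smul_eq_mul, Matrix.mul_apply,
      Finset.mul_sum, Finset.sum_mul]
    refine Finset.sum_congr rfl fun m _ => Finset.sum_congr rfl fun i _ => ?_
    rw [Finset.sum_comm]
  have rhs : (∑ j, ∑ k, ncDeriv P M (a, j) (k, b) * H j k) =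
      ∑ j, ∑ k, ∑ m ∈ P.support, ∑ i ∈ Finset.range m,
        P.coeff m * ((M ^ i) a j * H j k * (M ^ (m - 1 - i)) k b) := by
    refine Finset.sum_congr rfl fun j _ => Finset.sum_congr rfl fun k _ => ?_
    rw [ncDeriv_entry, Finset.sum_mul]
    refine Finset.sum_congr rfl fun m _ => ?_
    rw [mul_assoc, Finset.sum_mul, Finset.mul_sum]
    exact Finset.sum_congr rfl fun i _ => by ring
  rw [lhs, rhs, ← swap3]
  refine Finset.sum_congr rfl fun m _ => (swap3 (Finset.range m) _)

lemma sm_entry_mul {α β : ℝ} (h : α + β ≠ 0) {A B : ℝ → ℝ → Mat d}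
    (hA : ∀ a b : Fin d, Sm α fun s t => A s t a b)
    (hB : ∀ a b : Fin d, Sm β fun s t => B s t a b) (a b : Fin d) :
    Sm (α + β) fun s t => (A s t * B s t) a b :=
  (Sm.sum Finset.univ (fun j s t => A s t a j * B s t j b)
    (fun j _ => Sm.mul h (hA a j) (hB j b))).congr
    (fun s t _ _ _ => (Matrix.mul_apply).symm)

end Matrices

lemma unif {ι : Type*} [Fintype ι] {α : ℝ} (G : ι → ℝ → ℝ → ℂ)
    (h : ∀ i, Sm α (G i)) :
    ∃ K : ℝ, ∀ s t : ℝ, 0 ≤ s → s ≤ t → t ≤ 1 → ∀ i,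
      ‖G i s t‖ ≤ K * (t - s) ^ α := by
  choose K hK0 hK using h
  exact ⟨∑ i, K i, fun s t hs hst ht i => (hK i s t hs hst ht).trans
    (mul_le_mul_of_nonneg_right (Finset.single_le_sum (fun j _ => hK0 j) (Finset.mem_univ i))
      (rpow_nn α hst))⟩

/-- `U_t = P(X_t) ⊗ Q(X_t)` is a controlled biprocess: its increments expand as
`(δU)_{st} = (δX)_{st} ♯ 𝒰¹_s + 𝒰²_s ♯ (δX)_{st} + U♭_{st}` with
`𝒰¹_s = ∂P(X_s) ⊗ Q(X_s)`, `𝒰²_s = P(X_s) ⊗ ∂Q(X_s)`, the `𝒰`'s `γ`-Hölder and the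
remainder `U♭` `2γ`-Hölder. -/
theorem stmt12 (d : ℕ) (hd : 1 ≤ d) (γ : ℝ) (hγ0 : 1 / 3 < γ) (hγ1 : γ < 1)
    (X : ℝ → Mat d)
    (hX : ∃ K : ℝ, ∀ s t : ℝ, 0 ≤ s → s ≤ t → t ≤ 1 → ∀ m n : Fin d,
      ‖X t m n - X s m n‖ ≤ K * (t - s) ^ γ)
    (P Q : Polynomial ℂ)
    (U : ℝ → Tens d)
    (hU : ∀ t : ℝ, U t = tensOf (Polynomial.aeval (X t) P) (Polynomial.aeval (X t) Q))
    (U1 U2 : ℝ → Tens3 d)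
    (hU1 : ∀ s : ℝ, ∀ p q r : Fin d × Fin d,
      U1 s p q r = ncDeriv P (X s) p q * (Polynomial.aeval (X s) Q) r.1 r.2)
    (hU2 : ∀ s : ℝ, ∀ p q r : Fin d × Fin d,
      U2 s p q r = (Polynomial.aeval (X s) P) p.1 p.2 * ncDeriv Q (X s) q r) :
    (∃ K : ℝ, ∀ s t : ℝ, 0 ≤ s → s ≤ t → t ≤ 1 → ∀ p q r : Fin d × Fin d,
      ‖U1 t p q r - U1 s p q r‖ ≤ K * (t - s) ^ γ) ∧
    (∃ K : ℝ, ∀ s t : ℝ, 0 ≤ s → s ≤ t → t ≤ 1 → ∀ p q r : Fin d × Fin d,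
      ‖U2 t p q r - U2 s p q r‖ ≤ K * (t - s) ^ γ) ∧
    (∃ K : ℝ, ∀ s t : ℝ, 0 ≤ s → s ≤ t → t ≤ 1 → ∀ p q : Fin d × Fin d,
      ‖U t p q - U s p q - sharpLeft (X t - X s) (U1 s) p q -
          sharpRight (U2 s) (X t - X s) p q‖
        ≤ K * (t - s) ^ (2 * γ)) := by
  have hγpos : 0 < γ := by linarith
  obtain ⟨K0, hK0⟩ := hX
  -- the entries of X are γ-Hölder and bounded on [0,1]
  have hXH : ∀ a b : Fin d, HoldF γ fun u => X u a b := by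
    intro a b
    constructor
    · exact ⟨max K0 0, le_max_right _ _, fun s t hs hst ht =>
        (hK0 s t hs hst ht a b).trans
          (mul_le_mul_of_nonneg_right (le_max_left _ _) (rpow_nn γ hst))⟩
    · refine ⟨‖X 0 a b‖ + max K0 0, by positivity, fun s t hs hst ht => ?_⟩
      rw [Real.rpow_zero, mul_one]
      have ht0 : 0 ≤ t := le_trans hs hst
      have h1 := hK0 0 t le_rfl ht0 ht a b
      have h2 : (t - 0) ^ γ ≤ 1 := rpow_le_one' hγpos.le le_rfl ht0 ht
      have h3 : ‖X t a b - X 0 a b‖ ≤ max K0 0 := by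
        refine h1.trans ?_
        calc K0 * (t - 0) ^ γ ≤ max K0 0 * (t - 0) ^ γ :=
              mul_le_mul_of_nonneg_right (le_max_left _ _) (rpow_nn γ ht0)
          _ ≤ max K0 0 * 1 := mul_le_mul_of_nonneg_left h2 (le_max_right _ _)
          _ = max K0 0 := mul_one _
      calc ‖X t a b‖
          = ‖X 0 a b + (X t a b - X 0 a b)‖ := by congr 1; ring
        _ ≤ ‖X 0 a b‖ + ‖X t a b - X 0 a b‖ :=
            norm_add_le _ _
        _ ≤ ‖X 0 a b‖ + max K0 0 := add_le_add_right h3 _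
  refine ⟨?_, ?_, ?_⟩
  · -- part 1
    obtain ⟨K, hK⟩ := unif
      (ι := (Fin d × Fin d) × (Fin d × Fin d) × (Fin d × Fin d))
      (fun i s t => U1 t i.1 i.2.1 i.2.2 - U1 s i.1 i.2.1 i.2.2) (by
        rintro ⟨p, q, r⟩
        refine (((holdF_ncDeriv hγpos hXH P p q).mul hγpos
          (holdF_aeval hγpos hXH Q r.1 r.2)).1).congr fun s t _ _ _ => by
            simp only [hU1])
    exact ⟨K, fun s t hs hst ht p q r => hK s t hs hst ht (p, q, r)⟩
  · -- part 2
    obtain ⟨K, hK⟩ := unif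
      (ι := (Fin d × Fin d) × (Fin d × Fin d) × (Fin d × Fin d))
      (fun i s t => U2 t i.1 i.2.1 i.2.2 - U2 s i.1 i.2.1 i.2.2) (by
        rintro ⟨p, q, r⟩
        refine (((holdF_aeval hγpos hXH P p.1 p.2).mul hγpos
          (holdF_ncDeriv hγpos hXH Q q r)).1).congr fun s t _ _ _ => by
            simp only [hU2])
    exact ⟨K, fun s t hs hst ht p q r => hK s t hs hst ht (p, q, r)⟩
  · -- part 3
    have hH : ∀ a b : Fin d, Sm γ fun s t => (X t - X s) a b := fun a b =>
      ((hXH a b).1).congr (fun s t _ _ _ => (Matrix.sub_apply _ _ _ _).symm)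
    have hpow0s : ∀ (i : ℕ) (a b : Fin d), Sm 0 fun s t => (X s ^ i) a b :=
      fun i a b => (holdF_pow hγpos hXH i a b).src hγpos.le
    have hpowd : ∀ (k : ℕ) (a b : Fin d), Sm γ fun s t => (X t ^ k - X s ^ k) a b :=
      fun k a b => ((holdF_pow hγpos hXH k a b).1).congr
        (fun s t _ _ _ => (Matrix.sub_apply _ _ _ _).symm)
    -- triple products for the Taylor remainder
    have htriple : ∀ (m i : ℕ) (a b : Fin d), Sm (2 * γ) fun s t =>
        (X s ^ i * (X t - X s) * (X t ^ (m - 1 - i) - X s ^ (m - 1 - i))) a b := by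
      intro m i a b
      have h1 : ∀ a b : Fin d, Sm γ fun s t => (X s ^ i * (X t - X s)) a b := by
        intro a b
        have := sm_entry_mul (show (0 : ℝ) + γ ≠ 0 by simpa using hγpos.ne')
          (hpow0s i) hH a b
        rwa [zero_add] at this
      have := sm_entry_mul (show γ + γ ≠ 0 by positivity) h1 (hpowd (m - 1 - i)) a b
      rwa [← two_mul] at this
    -- triple products for sharpM
    have hsp3 : ∀ (m i : ℕ) (a b : Fin d), Sm γ fun s t =>
        (X s ^ i * (X t - X s) * (X s ^ (m - 1 - i))) a b := by
      intro m i a b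
      have h1 : ∀ a b : Fin d, Sm γ fun s t => (X s ^ i * (X t - X s)) a b := by
        intro a b
        have := sm_entry_mul (show (0 : ℝ) + γ ≠ 0 by simpa using hγpos.ne')
          (hpow0s i) hH a b
        rwa [zero_add] at this
      have := sm_entry_mul (show γ + (0 : ℝ) ≠ 0 by simpa using hγpos.ne')
        h1 (hpow0s (m - 1 - i)) a b
      rwa [add_zero] at this
    have hRP : ∀ (R : Polynomial ℂ) (a b : Fin d), Sm (2 * γ) fun s t =>
        (Polynomial.aeval (X t) R - Polynomial.aeval (X s) R -
          sharpM R (X s) (X t - X s)) a b := by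
      intro R a b
      have hsum : Sm (2 * γ) fun s t => ∑ m ∈ R.support, R.coeff m *
          ∑ i ∈ Finset.range m,
            (X s ^ i * (X t - X s) * (X t ^ (m - 1 - i) - X s ^ (m - 1 - i))) a b :=
        Sm.sum _ _ fun m _ => Sm.const_mul _ (Sm.sum _ _ fun i _ => htriple m i a b)
      refine hsum.congr fun s t _ _ _ => ?_
      rw [taylorM, Matrix.sum_apply]
      exact Finset.sum_congr rfl fun m _ => by
        rw [Matrix.smul_apply, smul_eq_mul, Matrix.sum_apply]
    have hSP : ∀ (R : Polynomial ℂ) (a b : Fin d), Sm γ fun s t =>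
        sharpM R (X s) (X t - X s) a b := by
      intro R a b
      have hsum : Sm γ fun s t => ∑ m ∈ R.support, R.coeff m *
          ∑ i ∈ Finset.range m, (X s ^ i * (X t - X s) * (X s ^ (m - 1 - i))) a b :=
        Sm.sum _ _ fun m _ => Sm.const_mul _ (Sm.sum _ _ fun i _ => hsp3 m i a b)
      refine hsum.congr fun s t _ _ _ => ?_
      rw [sharpM, Matrix.sum_apply]
      exact Finset.sum_congr rfl fun m _ => by
        rw [Matrix.smul_apply, smul_eq_mul, Matrix.sum_apply]
    have hE : ∀ i : (Fin d × Fin d) × (Fin d × Fin d), Sm (2 * γ) fun s t =>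
        U t i.1 i.2 - U s i.1 i.2 - sharpLeft (X t - X s) (U1 s) i.1 i.2 -
          sharpRight (U2 s) (X t - X s) i.1 i.2 := by
      rintro ⟨p, q⟩
      have hQ := holdF_aeval hγpos hXH Q q.1 q.2
      have hPsrc := (holdF_aeval hγpos hXH P p.1 p.2).src hγpos.le
      have t1 : Sm (2 * γ) fun s t =>
          (Polynomial.aeval (X t) P - Polynomial.aeval (X s) P -
            sharpM P (X s) (X t - X s)) p.1 p.2 * (Polynomial.aeval (X t) Q) q.1 q.2 := by
        have := Sm.mul (show 2 * γ + 0 ≠ 0 by simpa using (by positivity : (0:ℝ) < 2 * γ).ne')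
          (hRP P p.1 p.2) hQ.2
        rwa [add_zero] at this
      have t2 : Sm (2 * γ) fun s t => sharpM P (X s) (X t - X s) p.1 p.2 *
          ((Polynomial.aeval (X t) Q) q.1 q.2 - (Polynomial.aeval (X s) Q) q.1 q.2) := by
        have := Sm.mul (show γ + γ ≠ 0 by positivity) (hSP P p.1 p.2) hQ.1
        rwa [← two_mul] at this
      have t3 : Sm (2 * γ) fun s t => (Polynomial.aeval (X s) P) p.1 p.2 *
          (Polynomial.aeval (X t) Q - Polynomial.aeval (X s) Q -
            sharpM Q (X s) (X t - X s)) q.1 q.2 := by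
        have := Sm.mul (show (0 : ℝ) + 2 * γ ≠ 0 by
          simpa using (by positivity : (0:ℝ) < 2 * γ).ne') hPsrc (hRP Q q.1 q.2)
        rwa [zero_add] at this
      refine ((t1.add t2).add t3).congr fun s t _ _ _ => ?_
      have hL : sharpLeft (X t - X s) (U1 s) p q =
          sharpM P (X s) (X t - X s) p.1 p.2 * (Polynomial.aeval (X s) Q) q.1 q.2 := by
        simp only [sharpLeft, hU1]
        rw [sharpM_entry, Finset.sum_mul]
        exact Finset.sum_congr rfl fun j _ => by
          rw [Finset.sum_mul]
          exact Finset.sum_congr rfl fun k _ => by ring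
      have hR : sharpRight (U2 s) (X t - X s) p q =
          (Polynomial.aeval (X s) P) p.1 p.2 * sharpM Q (X s) (X t - X s) q.1 q.2 := by
        simp only [sharpRight, hU2]
        rw [sharpM_entry, Finset.mul_sum]
        exact Finset.sum_congr rfl fun j _ => by
          rw [Finset.mul_sum]
          exact Finset.sum_congr rfl fun k _ => by ring
      rw [hU t, hU s, hL, hR]
      simp only [tensOf, Matrix.sub_apply]
      ring
    obtain ⟨K, hK⟩ := unif _ hE
    exact ⟨K, fun s t hs hst ht p q => hK s t hs hst ht (p, q)⟩
end
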